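/- Let f : ℝ × [0,∞) → [0,∞) be Borel with 0 < \bar f := ∫_ℝ ∫_{max(a,0)}^∞ (2y − a) f(a,y) dy da < ∞, set f^⋆ := 1/\bar f, and define φ(y) := f^⋆ [∫_ℝ ∫_{max(y, max(a,0))}^∞ f(a,η) dη da + ∫_{−∞}^y f(a,y)(y − a) da] and Φ(y) := ∫_0^y φ(x) dx for y ≥ 0. Then ∫_0^∞ φ(y) dy = 1, and for every y ≥ 0 one has 1 − Φ(y) = f^⋆ ∫_ℝ ∫_0^∞ f(a,η) 1_{{η > max(y, max(a,0))}} (2η − a − y) dη da. -/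

import Mathlib

open MeasureTheory Filter Set
open scoped ENNReal NNReal

noncomputable section

/-- `f̄ = ∫_ℝ ∫_{max(a,0)}^∞ (2y - a) f(a,y) dy da`. -/
def barI (f : ℝ × ℝ → ℝ) : ℝ≥0∞ :=
  ∫⁻ a, ∫⁻ y in Ioi (max a 0), ENNReal.ofReal ((2 * y - a) * f (a, y))

/-- `φ(y) = f⋆ [∫_ℝ ∫_{max(y, max(a,0))}^∞ f(a,η) dη da + ∫_{-∞}^y f(a,y)(y-a) da]`
where `f⋆ = 1/f̄`. -/
def phiI (f : ℝ × ℝ → ℝ) (y : ℝ) : ℝ :=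
  ((barI f)⁻¹ *
    ((∫⁻ a, ∫⁻ η in Ioi (max y (max a 0)), ENNReal.ofReal (f (a, η)))
      + ∫⁻ a in Iio y, ENNReal.ofReal (f (a, y) * (y - a)))).toReal

/-- `Φ(y) = ∫_0^y φ(x) dx`. -/
def PhiI (f : ℝ × ℝ → ℝ) (y : ℝ) : ℝ := ∫ x in (0 : ℝ)..y, phiI f x

namespace Stmt9Aux

lemma lint_Ioi (c : ℝ) (g : ℝ → ℝ≥0∞) :
    ∫⁻ η in Ioi c, g η = ∫⁻ η, if c < η then g η else 0 := by
  rw [← lintegral_indicator measurableSet_Ioi]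
  congr 1

lemma lint_Iio (c : ℝ) (g : ℝ → ℝ≥0∞) :
    ∫⁻ a in Iio c, g a = ∫⁻ a, if a < c then g a else 0 := by
  rw [← lintegral_indicator measurableSet_Iio]
  congr 1

lemma lint_Ioc (u v : ℝ) (g : ℝ → ℝ≥0∞) :
    ∫⁻ x in Ioc u v, g x = ∫⁻ x, if u < x ∧ x ≤ v then g x else 0 := by
  rw [← lintegral_indicator measurableSet_Ioc]
  congr 1
  funext x
  by_cases h : u < x ∧ x ≤ v <;> simp [indicator_apply, mem_Ioc, h]

lemma vol_inter {y η : ℝ} (hy : 0 ≤ y) (h0 : 0 < η) :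
    volume (Iio η ∩ Ioc 0 y) = ENNReal.ofReal (min η y) := by
  rcases le_or_gt η y with hle | hlt
  · have hs : Iio η ∩ Ioc 0 y = Ioo 0 η := by
      ext z
      simp only [mem_inter_iff, mem_Iio, mem_Ioc, mem_Ioo]
      constructor
      · rintro ⟨h1, h2, h3⟩; exact ⟨h2, h1⟩
      · rintro ⟨h1, h2⟩; exact ⟨h2, h1, le_trans h2.le hle⟩
    rw [hs, Real.volume_Ioo, min_eq_left hle, sub_zero]
  · have hs : Iio η ∩ Ioc 0 y = Ioc 0 y := by
      apply inter_eq_self_of_subset_right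
      intro z hz
      exact lt_of_le_of_lt hz.2 hlt
    rw [hs, Real.volume_Ioc, min_eq_right hlt.le, sub_zero]

lemma vol_inter' {η : ℝ} (h0 : 0 < η) :
    volume (Iio η ∩ Ioi 0) = ENNReal.ofReal η := by
  have hs : Iio η ∩ Ioi (0:ℝ) = Ioo 0 η := by
    ext z
    simp only [mem_inter_iff, mem_Iio, mem_Ioi, mem_Ioo]
    tauto
  rw [hs, Real.volume_Ioo, sub_zero]

variable {f : ℝ × ℝ → ℝ}

/-- The bracket function appearing in `phiI`. -/
def Hf (f : ℝ × ℝ → ℝ) (x : ℝ) : ℝ≥0∞ :=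
  (∫⁻ a, ∫⁻ η in Ioi (max x (max a 0)), ENNReal.ofReal (f (a, η)))
    + ∫⁻ a in Iio x, ENNReal.ofReal (f (a, x) * (x - a))

/-- The tail double integral. -/
def Gf (f : ℝ × ℝ → ℝ) (y : ℝ) : ℝ≥0∞ :=
  ∫⁻ a, ∫⁻ η in Ioi (0 : ℝ),
    (if max y (max a 0) < η then ENNReal.ofReal (f (a, η) * (2 * η - a - y)) else 0)

lemma measK1 (hfm : Measurable f) :
    Measurable fun q : (ℝ × ℝ) × ℝ =>
      if max q.1.1 (max q.1.2 0) < q.2 then ENNReal.ofReal (f (q.1.2, q.2)) else 0 := by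
  apply Measurable.ite
  · exact measurableSet_lt (measurable_fst.fst.max (measurable_fst.snd.max measurable_const))
      measurable_snd
  · exact (hfm.comp (measurable_fst.snd.prodMk measurable_snd)).ennreal_ofReal
  · exact measurable_const

lemma measK1inner (hfm : Measurable f) (a : ℝ) :
    Measurable fun q : ℝ × ℝ =>
      if max q.1 (max a 0) < q.2 then ENNReal.ofReal (f (a, q.2)) else 0 := by
  apply Measurable.ite
  · exact measurableSet_lt (measurable_fst.max measurable_const) measurable_snd
  · exact (hfm.comp (measurable_const.prodMk measurable_snd)).ennreal_ofReal
  · exact measurable_const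

lemma measK2 (hfm : Measurable f) :
    Measurable fun q : ℝ × ℝ =>
      if q.2 < q.1 then ENNReal.ofReal (f (q.2, q.1) * (q.1 - q.2)) else 0 := by
  apply Measurable.ite
  · exact measurableSet_lt measurable_snd measurable_fst
  · exact ((hfm.comp (measurable_snd.prodMk measurable_fst)).mul
      (measurable_fst.sub measurable_snd)).ennreal_ofReal
  · exact measurable_const

lemma measG1 (hfm : Measurable f) (y : ℝ) :
    Measurable fun p : ℝ × ℝ =>
      if max p.1 0 < p.2 then ENNReal.ofReal (f (p.1, p.2)) * ENNReal.ofReal (min p.2 y) else 0 := by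
  apply Measurable.ite
  · exact measurableSet_lt (measurable_fst.max measurable_const) measurable_snd
  · exact ((hfm.comp (measurable_fst.prodMk measurable_snd)).ennreal_ofReal).mul
      ((measurable_snd.min measurable_const).ennreal_ofReal)
  · exact measurable_const

lemma measG1' (hfm : Measurable f) :
    Measurable fun p : ℝ × ℝ =>
      if max p.1 0 < p.2 then ENNReal.ofReal (f (p.1, p.2)) * ENNReal.ofReal p.2 else 0 := by
  apply Measurable.ite
  · exact measurableSet_lt (measurable_fst.max measurable_const) measurable_snd
  · exact ((hfm.comp (measurable_fst.prodMk measurable_snd)).ennreal_ofReal).mul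
      (measurable_snd.ennreal_ofReal)
  · exact measurable_const

lemma measG2 (hfm : Measurable f) (y : ℝ) :
    Measurable fun p : ℝ × ℝ =>
      if max p.1 0 < p.2 ∧ p.2 ≤ y then ENNReal.ofReal (f (p.1, p.2) * (p.2 - p.1)) else 0 := by
  apply Measurable.ite
  · exact (measurableSet_lt (measurable_fst.max measurable_const) measurable_snd).inter
      (measurableSet_le measurable_snd measurable_const)
  · exact ((hfm.comp (measurable_fst.prodMk measurable_snd)).mul
      (measurable_snd.sub measurable_fst)).ennreal_ofReal
  · exact measurable_const

lemma measG2' (hfm : Measurable f) :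
    Measurable fun p : ℝ × ℝ =>
      if max p.1 0 < p.2 then ENNReal.ofReal (f (p.1, p.2) * (p.2 - p.1)) else 0 := by
  apply Measurable.ite
  · exact measurableSet_lt (measurable_fst.max measurable_const) measurable_snd
  · exact ((hfm.comp (measurable_fst.prodMk measurable_snd)).mul
      (measurable_snd.sub measurable_fst)).ennreal_ofReal
  · exact measurable_const

lemma measG3 (hfm : Measurable f) (y : ℝ) :
    Measurable fun p : ℝ × ℝ =>
      if max y (max p.1 0) < p.2 then ENNReal.ofReal (f (p.1, p.2) * (2 * p.2 - p.1 - y)) else 0 := by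
  apply Measurable.ite
  · exact measurableSet_lt (measurable_const.max (measurable_fst.max measurable_const))
      measurable_snd
  · exact ((hfm.comp (measurable_fst.prodMk measurable_snd)).mul
      (((measurable_const.mul measurable_snd).sub measurable_fst).sub measurable_const)).ennreal_ofReal
  · exact measurable_const

/-- Measurability of the first part of `Hf`. -/
lemma measA (hfm : Measurable f) :
    Measurable fun x : ℝ => ∫⁻ a, ∫⁻ η in Ioi (max x (max a 0)), ENNReal.ofReal (f (a, η)) := by
  have heq : (fun x : ℝ => ∫⁻ a, ∫⁻ η in Ioi (max x (max a 0)), ENNReal.ofReal (f (a, η)))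
      = fun x : ℝ => ∫⁻ a, ∫⁻ η,
          (if max x (max a 0) < η then ENNReal.ofReal (f (a, η)) else 0) :=
    funext fun x => lintegral_congr fun a => lint_Ioi _ _
  rw [heq]
  exact ((measK1 hfm).lintegral_prod_right').lintegral_prod_right'

/-- Measurability of the second part of `Hf`. -/
lemma measB (hfm : Measurable f) :
    Measurable fun x : ℝ => ∫⁻ a in Iio x, ENNReal.ofReal (f (a, x) * (x - a)) := by
  have heq : (fun x : ℝ => ∫⁻ a in Iio x, ENNReal.ofReal (f (a, x) * (x - a)))
      = fun x : ℝ => ∫⁻ a, (if a < x then ENNReal.ofReal (f (a, x) * (x - a)) else 0) :=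
    funext fun x => lint_Iio _ _
  rw [heq]
  exact (measK2 hfm).lintegral_prod_right'

lemma measH (hfm : Measurable f) : Measurable (Hf f) :=
  (measA hfm).add (measB hfm)

/-- Fubini step for the first part of `Hf`, over `Ioc 0 y`. -/
lemma stepD (hfm : Measurable f) {y : ℝ} (hy : 0 ≤ y) :
    (∫⁻ x in Ioc 0 y, ∫⁻ a, ∫⁻ η in Ioi (max x (max a 0)), ENNReal.ofReal (f (a, η)))
      = ∫⁻ a, ∫⁻ η,
          (if max a 0 < η then ENNReal.ofReal (f (a, η)) * ENNReal.ofReal (min η y) else 0) := by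
  have hswap1 :
      (∫⁻ x in Ioc 0 y, ∫⁻ a, ∫⁻ η,
          (if max x (max a 0) < η then ENNReal.ofReal (f (a, η)) else 0))
        = ∫⁻ a, ∫⁻ x in Ioc 0 y, ∫⁻ η,
            (if max x (max a 0) < η then ENNReal.ofReal (f (a, η)) else 0) :=
    lintegral_lintegral_swap ((measK1 hfm).lintegral_prod_right').aemeasurable
  calc
    (∫⁻ x in Ioc 0 y, ∫⁻ a, ∫⁻ η in Ioi (max x (max a 0)), ENNReal.ofReal (f (a, η)))
        = ∫⁻ x in Ioc 0 y, ∫⁻ a, ∫⁻ η,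
            (if max x (max a 0) < η then ENNReal.ofReal (f (a, η)) else 0) :=
      lintegral_congr fun x => lintegral_congr fun a => lint_Ioi _ _
    _ = ∫⁻ a, ∫⁻ x in Ioc 0 y, ∫⁻ η,
            (if max x (max a 0) < η then ENNReal.ofReal (f (a, η)) else 0) := hswap1
    _ = ∫⁻ a, ∫⁻ η, ∫⁻ x in Ioc 0 y,
            (if max x (max a 0) < η then ENNReal.ofReal (f (a, η)) else 0) :=
      lintegral_congr fun a =>
        lintegral_lintegral_swap (measK1inner hfm a).aemeasurable
    _ = ∫⁻ a, ∫⁻ η,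
          (if max a 0 < η then ENNReal.ofReal (f (a, η)) * ENNReal.ofReal (min η y) else 0) := by
      refine lintegral_congr fun a => lintegral_congr fun η => ?_
      by_cases h : max a 0 < η
      · have h0 : (0:ℝ) < η := lt_of_le_of_lt (le_max_right a 0) h
        rw [if_pos h]
        have hpt : ∀ x : ℝ, (if max x (max a 0) < η then ENNReal.ofReal (f (a, η)) else 0)
            = (Iio η).indicator (fun _ => ENNReal.ofReal (f (a, η))) x := by
          intro x
          by_cases hx : x < η
          · rw [if_pos (max_lt hx h)]; simp [indicator_apply, hx]
          · rw [if_neg (fun hc => hx (lt_of_le_of_lt (le_max_left x (max a 0)) hc))]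
            simp [indicator_apply, hx]
        rw [lintegral_congr hpt, lintegral_indicator measurableSet_Iio,
          setLIntegral_const, Measure.restrict_apply measurableSet_Iio, vol_inter hy h0]
      · rw [if_neg h]
        have hpt : ∀ x : ℝ, (if max x (max a 0) < η then ENNReal.ofReal (f (a, η)) else 0) = 0 := by
          intro x
          rw [if_neg]
          intro hc
          exact h (lt_of_le_of_lt (le_max_right x (max a 0)) hc)
        rw [lintegral_congr hpt, lintegral_zero]

/-- Fubini step for the first part of `Hf`, over `Ioi 0`. -/
lemma stepD' (hfm : Measurable f) :
    (∫⁻ x in Ioi (0:ℝ), ∫⁻ a, ∫⁻ η in Ioi (max x (max a 0)), ENNReal.ofReal (f (a, η)))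
      = ∫⁻ a, ∫⁻ η,
          (if max a 0 < η then ENNReal.ofReal (f (a, η)) * ENNReal.ofReal η else 0) := by
  have hswap1 :
      (∫⁻ x in Ioi (0:ℝ), ∫⁻ a, ∫⁻ η,
          (if max x (max a 0) < η then ENNReal.ofReal (f (a, η)) else 0))
        = ∫⁻ a, ∫⁻ x in Ioi (0:ℝ), ∫⁻ η,
            (if max x (max a 0) < η then ENNReal.ofReal (f (a, η)) else 0) :=
    lintegral_lintegral_swap ((measK1 hfm).lintegral_prod_right').aemeasurable
  calc
    (∫⁻ x in Ioi (0:ℝ), ∫⁻ a, ∫⁻ η in Ioi (max x (max a 0)), ENNReal.ofReal (f (a, η)))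
        = ∫⁻ x in Ioi (0:ℝ), ∫⁻ a, ∫⁻ η,
            (if max x (max a 0) < η then ENNReal.ofReal (f (a, η)) else 0) :=
      lintegral_congr fun x => lintegral_congr fun a => lint_Ioi _ _
    _ = ∫⁻ a, ∫⁻ x in Ioi (0:ℝ), ∫⁻ η,
            (if max x (max a 0) < η then ENNReal.ofReal (f (a, η)) else 0) := hswap1
    _ = ∫⁻ a, ∫⁻ η, ∫⁻ x in Ioi (0:ℝ),
            (if max x (max a 0) < η then ENNReal.ofReal (f (a, η)) else 0) :=
      lintegral_congr fun a =>
        lintegral_lintegral_swap (measK1inner hfm a).aemeasurable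
    _ = ∫⁻ a, ∫⁻ η,
          (if max a 0 < η then ENNReal.ofReal (f (a, η)) * ENNReal.ofReal η else 0) := by
      refine lintegral_congr fun a => lintegral_congr fun η => ?_
      by_cases h : max a 0 < η
      · have h0 : (0:ℝ) < η := lt_of_le_of_lt (le_max_right a 0) h
        rw [if_pos h]
        have hpt : ∀ x : ℝ, (if max x (max a 0) < η then ENNReal.ofReal (f (a, η)) else 0)
            = (Iio η).indicator (fun _ => ENNReal.ofReal (f (a, η))) x := by
          intro x
          by_cases hx : x < η
          · rw [if_pos (max_lt hx h)]; simp [indicator_apply, hx]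
          · rw [if_neg (fun hc => hx (lt_of_le_of_lt (le_max_left x (max a 0)) hc))]
            simp [indicator_apply, hx]
        rw [lintegral_congr hpt, lintegral_indicator measurableSet_Iio,
          setLIntegral_const, Measure.restrict_apply measurableSet_Iio, vol_inter' h0]
      · rw [if_neg h]
        have hpt : ∀ x : ℝ, (if max x (max a 0) < η then ENNReal.ofReal (f (a, η)) else 0) = 0 := by
          intro x
          rw [if_neg]
          intro hc
          exact h (lt_of_le_of_lt (le_max_right x (max a 0)) hc)
        rw [lintegral_congr hpt, lintegral_zero]

/-- Fubini step for the second part of `Hf`, over `Ioc 0 y`. -/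
lemma stepE (hfm : Measurable f) (y : ℝ) :
    (∫⁻ x in Ioc 0 y, ∫⁻ a in Iio x, ENNReal.ofReal (f (a, x) * (x - a)))
      = ∫⁻ a, ∫⁻ η,
          (if max a 0 < η ∧ η ≤ y then ENNReal.ofReal (f (a, η) * (η - a)) else 0) := by
  calc
    (∫⁻ x in Ioc 0 y, ∫⁻ a in Iio x, ENNReal.ofReal (f (a, x) * (x - a)))
        = ∫⁻ x in Ioc 0 y, ∫⁻ a,
            (if a < x then ENNReal.ofReal (f (a, x) * (x - a)) else 0) :=
      lintegral_congr fun x => lint_Iio _ _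
    _ = ∫⁻ a, ∫⁻ x in Ioc 0 y,
            (if a < x then ENNReal.ofReal (f (a, x) * (x - a)) else 0) :=
      lintegral_lintegral_swap (measK2 hfm).aemeasurable
    _ = ∫⁻ a, ∫⁻ η,
          (if max a 0 < η ∧ η ≤ y then ENNReal.ofReal (f (a, η) * (η - a)) else 0) := by
      refine lintegral_congr fun a => ?_
      rw [lint_Ioc]
      refine lintegral_congr fun x => ?_
      by_cases h : max a 0 < x ∧ x ≤ y
      · rw [if_pos h, if_pos ⟨lt_of_le_of_lt (le_max_right a 0) h.1, h.2⟩,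
          if_pos (lt_of_le_of_lt (le_max_left a 0) h.1)]
      · rw [if_neg h]
        by_cases h1 : 0 < x ∧ x ≤ y
        · rw [if_pos h1, if_neg]
          intro h2
          exact h ⟨max_lt h2 h1.1, h1.2⟩
        · rw [if_neg h1]

/-- Fubini step for the second part of `Hf`, over `Ioi 0`. -/
lemma stepE' (hfm : Measurable f) :
    (∫⁻ x in Ioi (0:ℝ), ∫⁻ a in Iio x, ENNReal.ofReal (f (a, x) * (x - a)))
      = ∫⁻ a, ∫⁻ η,
          (if max a 0 < η then ENNReal.ofReal (f (a, η) * (η - a)) else 0) := by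
  calc
    (∫⁻ x in Ioi (0:ℝ), ∫⁻ a in Iio x, ENNReal.ofReal (f (a, x) * (x - a)))
        = ∫⁻ x in Ioi (0:ℝ), ∫⁻ a,
            (if a < x then ENNReal.ofReal (f (a, x) * (x - a)) else 0) :=
      lintegral_congr fun x => lint_Iio _ _
    _ = ∫⁻ a, ∫⁻ x in Ioi (0:ℝ),
            (if a < x then ENNReal.ofReal (f (a, x) * (x - a)) else 0) :=
      lintegral_lintegral_swap (measK2 hfm).aemeasurable
    _ = ∫⁻ a, ∫⁻ η,
          (if max a 0 < η then ENNReal.ofReal (f (a, η) * (η - a)) else 0) := by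
      refine lintegral_congr fun a => ?_
      rw [lint_Ioi]
      refine lintegral_congr fun x => ?_
      by_cases h : max a 0 < x
      · rw [if_pos h, if_pos (lt_of_le_of_lt (le_max_right a 0) h),
          if_pos (lt_of_le_of_lt (le_max_left a 0) h)]
      · rw [if_neg h]
        by_cases h1 : 0 < x
        · rw [if_pos h1, if_neg]
          intro h2
          exact h (max_lt h2 h1)
        · rw [if_neg h1]

/-- Rewriting `Gf` with full-line inner integral. -/
lemma stepC {y : ℝ} (hy : 0 ≤ y) :
    Gf f y
      = ∫⁻ a, ∫⁻ η,
          (if max y (max a 0) < η then ENNReal.ofReal (f (a, η) * (2 * η - a - y)) else 0) := by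
  refine lintegral_congr fun a => ?_
  rw [lint_Ioi]
  refine lintegral_congr fun η => ?_
  by_cases h : max y (max a 0) < η
  · have h0 : (0:ℝ) < η := lt_of_le_of_lt (hy.trans (le_max_left y (max a 0))) h
    simp [h, h0]
  · simp [h]

lemma stepB :
    barI f
      = ∫⁻ a, ∫⁻ η, (if max a 0 < η then ENNReal.ofReal ((2 * η - a) * f (a, η)) else 0) :=
  lintegral_congr fun a => lint_Ioi _ _

/-- The key identity: `∫_{(0,y]} H + G(y) = f̄` for `y ≥ 0`. -/
lemma key (hfm : Measurable f) (hf0 : ∀ p, 0 ≤ f p) {y : ℝ} (hy : 0 ≤ y) :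
    (∫⁻ x in Ioc 0 y, Hf f x) + Gf f y = barI f := by
  have hpt : ∀ a η : ℝ,
      (if max a 0 < η then ENNReal.ofReal ((2 * η - a) * f (a, η)) else 0)
        = (if max a 0 < η then ENNReal.ofReal (f (a, η)) * ENNReal.ofReal (min η y) else 0)
          + (if max a 0 < η ∧ η ≤ y then ENNReal.ofReal (f (a, η) * (η - a)) else 0)
          + (if max y (max a 0) < η then ENNReal.ofReal (f (a, η) * (2 * η - a - y)) else 0) := by
    intro a η
    by_cases h1 : max a 0 < η
    · have ha : a < η := lt_of_le_of_lt (le_max_left a 0) h1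
      have h0 : (0:ℝ) < η := lt_of_le_of_lt (le_max_right a 0) h1
      by_cases h2 : η ≤ y
      · have h3 : ¬ max y (max a 0) < η := not_lt.mpr (le_trans h2 (le_max_left y (max a 0)))
        rw [if_pos h1, if_pos h1, if_pos ⟨h1, h2⟩, if_neg h3, add_zero, min_eq_left h2,
          ← ENNReal.ofReal_mul (hf0 (a, η)),
          ← ENNReal.ofReal_add (mul_nonneg (hf0 (a, η)) h0.le)
            (mul_nonneg (hf0 (a, η)) (sub_nonneg.mpr ha.le))]
        congr 1; ring
      · push_neg at h2
        have h3 : max y (max a 0) < η := max_lt h2 h1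
        have hnn : (0:ℝ) ≤ 2 * η - a - y := by linarith
        rw [if_pos h1, if_pos h1, if_neg (fun hc => absurd hc.2 (not_le.mpr h2)), if_pos h3,
          add_zero, min_eq_right h2.le, ← ENNReal.ofReal_mul (hf0 (a, η)),
          ← ENNReal.ofReal_add (mul_nonneg (hf0 (a, η)) hy) (mul_nonneg (hf0 (a, η)) hnn)]
        congr 1; ring
    · have h3 : ¬ max y (max a 0) < η :=
        fun hc => h1 (lt_of_le_of_lt (le_max_right y (max a 0)) hc)
      simp [h1, h3]
  -- split and combine
  have hsplit : ∫⁻ x in Ioc 0 y, Hf f x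
      = (∫⁻ x in Ioc 0 y, ∫⁻ a, ∫⁻ η in Ioi (max x (max a 0)), ENNReal.ofReal (f (a, η)))
        + ∫⁻ x in Ioc 0 y, ∫⁻ a in Iio x, ENNReal.ofReal (f (a, x) * (x - a)) :=
    lintegral_add_left (measA hfm) _
  rw [hsplit, stepD hfm hy, stepE hfm y, stepC hy, stepB]
  have hinner : ∀ a : ℝ,
      (∫⁻ η, (if max a 0 < η then ENNReal.ofReal ((2 * η - a) * f (a, η)) else 0))
        = (∫⁻ η, (if max a 0 < η then ENNReal.ofReal (f (a, η)) * ENNReal.ofReal (min η y) else 0))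
          + (∫⁻ η, (if max a 0 < η ∧ η ≤ y then ENNReal.ofReal (f (a, η) * (η - a)) else 0))
          + ∫⁻ η, (if max y (max a 0) < η then ENNReal.ofReal (f (a, η) * (2 * η - a - y)) else 0) := by
    intro a
    have m1 : Measurable fun η : ℝ =>
        (if max a 0 < η then ENNReal.ofReal (f (a, η)) * ENNReal.ofReal (min η y) else 0) :=
      (measG1 hfm y).comp measurable_prodMk_left
    have m2 : Measurable fun η : ℝ =>
        (if max a 0 < η ∧ η ≤ y then ENNReal.ofReal (f (a, η) * (η - a)) else 0) :=
      (measG2 hfm y).comp measurable_prodMk_left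
    rw [← lintegral_add_left m1, ← lintegral_add_left (f := fun η =>
        (if max a 0 < η then ENNReal.ofReal (f (a, η)) * ENNReal.ofReal (min η y) else 0)
          + (if max a 0 < η ∧ η ≤ y then ENNReal.ofReal (f (a, η) * (η - a)) else 0)) (m1.add m2)]
    exact lintegral_congr fun η => hpt a η
  rw [lintegral_congr hinner,
    lintegral_add_left (f := fun a =>
        (∫⁻ η, (if max a 0 < η then ENNReal.ofReal (f (a, η)) * ENNReal.ofReal (min η y) else 0))
          + ∫⁻ η, (if max a 0 < η ∧ η ≤ y then ENNReal.ofReal (f (a, η) * (η - a)) else 0))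
      (((measG1 hfm y).lintegral_prod_right').add
      ((measG2 hfm y).lintegral_prod_right')),
    lintegral_add_left ((measG1 hfm y).lintegral_prod_right')]

/-- The total mass identity: `∫_{(0,∞)} H = f̄`. -/
lemma total (hfm : Measurable f) (hf0 : ∀ p, 0 ≤ f p) :
    (∫⁻ x in Ioi (0:ℝ), Hf f x) = barI f := by
  have hpt : ∀ a η : ℝ,
      (if max a 0 < η then ENNReal.ofReal ((2 * η - a) * f (a, η)) else 0)
        = (if max a 0 < η then ENNReal.ofReal (f (a, η)) * ENNReal.ofReal η else 0)
          + (if max a 0 < η then ENNReal.ofReal (f (a, η) * (η - a)) else 0) := by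
    intro a η
    by_cases h1 : max a 0 < η
    · have ha : a < η := lt_of_le_of_lt (le_max_left a 0) h1
      have h0 : (0:ℝ) < η := lt_of_le_of_lt (le_max_right a 0) h1
      rw [if_pos h1, if_pos h1, if_pos h1, ← ENNReal.ofReal_mul (hf0 (a, η)),
        ← ENNReal.ofReal_add (mul_nonneg (hf0 (a, η)) h0.le)
          (mul_nonneg (hf0 (a, η)) (sub_nonneg.mpr ha.le))]
      congr 1; ring
    · simp [h1]
  have hsplit : ∫⁻ x in Ioi (0:ℝ), Hf f x
      = (∫⁻ x in Ioi (0:ℝ), ∫⁻ a, ∫⁻ η in Ioi (max x (max a 0)), ENNReal.ofReal (f (a, η)))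
        + ∫⁻ x in Ioi (0:ℝ), ∫⁻ a in Iio x, ENNReal.ofReal (f (a, x) * (x - a)) :=
    lintegral_add_left (measA hfm) _
  rw [hsplit, stepD' hfm, stepE' hfm, stepB]
  have hinner : ∀ a : ℝ,
      (∫⁻ η, (if max a 0 < η then ENNReal.ofReal ((2 * η - a) * f (a, η)) else 0))
        = (∫⁻ η, (if max a 0 < η then ENNReal.ofReal (f (a, η)) * ENNReal.ofReal η else 0))
          + ∫⁻ η, (if max a 0 < η then ENNReal.ofReal (f (a, η) * (η - a)) else 0) := by
    intro a
    have m1 : Measurable fun η : ℝ =>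
        (if max a 0 < η then ENNReal.ofReal (f (a, η)) * ENNReal.ofReal η else 0) :=
      (measG1' hfm).comp measurable_prodMk_left
    rw [← lintegral_add_left m1]
    exact lintegral_congr fun η => hpt a η
  rw [lintegral_congr hinner,
    lintegral_add_left ((measG1' hfm).lintegral_prod_right')]

end Stmt9Aux

open Stmt9Aux in
/-- `φ` is a probability density: `∫_0^∞ φ(y) dy = 1`, and
`1 - Φ(y) = f⋆ ∫_ℝ ∫_0^∞ f(a,η) 1_{η > max(y, max(a,0))} (2η - a - y) dη da` for `y ≥ 0`. -/
theorem stmt_9 (f : ℝ × ℝ → ℝ) (hfm : Measurable f) (hf0 : ∀ p, 0 ≤ f p)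
    (hbar0 : 0 < barI f) (hbar : barI f < ⊤) :
    (∫ y in Ioi (0 : ℝ), phiI f y = 1) ∧
    ∀ y : ℝ, 0 ≤ y →
      1 - PhiI f y
        = ((barI f)⁻¹ *
            ∫⁻ a, ∫⁻ η in Ioi (0 : ℝ),
              (if max y (max a 0) < η then ENNReal.ofReal (f (a, η) * (2 * η - a - y))
               else 0)).toReal := by
  have hc0 : barI f ≠ 0 := hbar0.ne'
  have hct : barI f ≠ ⊤ := hbar.ne
  have hH : Measurable (Hf f) := measH hfm
  have hinvt : (barI f)⁻¹ < ⊤ := ENNReal.inv_lt_top.mpr hbar0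
  have htot : ∫⁻ x in Ioi (0:ℝ), Hf f x = barI f := total hfm hf0
  have hphi : ∀ x : ℝ, phiI f x = ((barI f)⁻¹ * Hf f x).toReal := fun x => rfl
  constructor
  · have hae : ∀ᵐ x ∂(volume.restrict (Ioi (0:ℝ))), (barI f)⁻¹ * Hf f x < ⊤ := by
      have h1 : ∀ᵐ x ∂(volume.restrict (Ioi (0:ℝ))), Hf f x < ⊤ :=
        ae_lt_top hH (by rw [htot]; exact hct)
      filter_upwards [h1] with x hx
      exact ENNReal.mul_lt_top hinvt hx
    calc
      ∫ y in Ioi (0:ℝ), phiI f y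
          = ∫ y in Ioi (0:ℝ), ((barI f)⁻¹ * Hf f y).toReal := by
        exact integral_congr_ae (Filter.Eventually.of_forall fun y => hphi y)
      _ = (∫⁻ y in Ioi (0:ℝ), (barI f)⁻¹ * Hf f y).toReal :=
        integral_toReal ((hH.const_mul _).aemeasurable) hae
      _ = 1 := by
        rw [lintegral_const_mul _ hH, htot, ENNReal.inv_mul_cancel hc0 hct, ENNReal.toReal_one]
  · intro y hy
    have hkey : (∫⁻ x in Ioc 0 y, Hf f x) + Gf f y = barI f := key hfm hf0 hy
    have hT : (∫⁻ x in Ioc 0 y, Hf f x) ≠ ⊤ :=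
      ne_top_of_le_ne_top hct (hkey ▸ self_le_add_right _ _)
    have hG : Gf f y ≠ ⊤ :=
      ne_top_of_le_ne_top hct (hkey ▸ self_le_add_left _ _)
    have haePhi : ∀ᵐ x ∂(volume.restrict (Ioc (0:ℝ) y)), (barI f)⁻¹ * Hf f x < ⊤ := by
      have h1 : ∀ᵐ x ∂(volume.restrict (Ioc (0:ℝ) y)), Hf f x < ⊤ := ae_lt_top hH hT
      filter_upwards [h1] with x hx
      exact ENNReal.mul_lt_top hinvt hx
    have hPhi : PhiI f y = ((barI f)⁻¹ * ∫⁻ x in Ioc 0 y, Hf f x).toReal := by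
      rw [PhiI, intervalIntegral.integral_of_le hy]
      calc
        ∫ x in Ioc (0:ℝ) y, phiI f x
            = ∫ x in Ioc (0:ℝ) y, ((barI f)⁻¹ * Hf f x).toReal :=
          integral_congr_ae (Filter.Eventually.of_forall fun x => hphi x)
        _ = (∫⁻ x in Ioc (0:ℝ) y, (barI f)⁻¹ * Hf f x).toReal :=
          integral_toReal ((hH.const_mul _).aemeasurable) haePhi
        _ = ((barI f)⁻¹ * ∫⁻ x in Ioc 0 y, Hf f x).toReal := by
          rw [lintegral_const_mul _ hH]
    have hTfin : (barI f)⁻¹ * (∫⁻ x in Ioc 0 y, Hf f x) ≠ ⊤ :=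
      ENNReal.mul_ne_top hinvt.ne hT
    have hGfin : (barI f)⁻¹ * Gf f y ≠ ⊤ := ENNReal.mul_ne_top hinvt.ne hG
    have hsum : ((barI f)⁻¹ * (∫⁻ x in Ioc 0 y, Hf f x)).toReal
        + ((barI f)⁻¹ * Gf f y).toReal = 1 := by
      rw [← ENNReal.toReal_add hTfin hGfin, ← mul_add, hkey,
        ENNReal.inv_mul_cancel hc0 hct, ENNReal.toReal_one]
    show 1 - PhiI f y = ((barI f)⁻¹ * Gf f y).toReal
    rw [hPhi]
    linarith

end
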